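/- For symplectic simplices B₁, B₂ in ℙ(ℝ^{2n}) (associated to symplectic bases as above, with duals B* defined via the symplectic form), B₁ ⊆ B₂* if and only if B₂ ⊆ B₁*. -/

import Mathlib

open LinearAlgebra.Projectivization Projectivization
open Filter Topology

/-- The quotient topology on projective space. -/
noncomputable instance (n : ℕ) : TopologicalSpace (Projectivization ℝ (Fin n → ℝ)) :=
  instTopologicalSpaceQuotient

/-- The standard symplectic form `ω(v,v′) = Σᵢ (−1)ⁱ vᵢ v′_{2n+1−i}` on `ℝ^{2n}`
(0-indexed version). -/
def symplForm (n : ℕ) (v w : Fin (2 * n) → ℝ) : ℝ :=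
  ∑ j : Fin (2 * n), (-1 : ℝ) ^ ((j : ℕ) + 1) * v j * w (Fin.rev j)


lemma symplForm_smul_left (n : ℕ) (a : ℝ) (v w : Fin (2*n) → ℝ) :
    symplForm n (a • v) w = a * symplForm n v w := by
  simp only [symplForm, Finset.mul_sum, Pi.smul_apply, smul_eq_mul]
  exact Finset.sum_congr rfl fun j _ => by ring

lemma symplForm_smul_right (n : ℕ) (a : ℝ) (v w : Fin (2*n) → ℝ) :
    symplForm n v (a • w) = a * symplForm n v w := by
  simp only [symplForm, Finset.mul_sum, Pi.smul_apply, smul_eq_mul]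
  exact Finset.sum_congr rfl fun j _ => by ring

lemma symplForm_sum_left (n : ℕ) {ι : Type*} (s : Finset ι) (f : ι → (Fin (2*n) → ℝ)) (w : Fin (2*n) → ℝ) :
    symplForm n (∑ i ∈ s, f i) w = ∑ i ∈ s, symplForm n (f i) w := by
  simp only [symplForm, Finset.sum_apply, Finset.sum_mul, Finset.mul_sum]
  exact Finset.sum_comm

lemma symplForm_sum_right (n : ℕ) {ι : Type*} (s : Finset ι) (f : ι → (Fin (2*n) → ℝ)) (v : Fin (2*n) → ℝ) :
    symplForm n v (∑ i ∈ s, f i) = ∑ i ∈ s, symplForm n v (f i) := by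
  simp only [symplForm, Finset.sum_apply, Finset.sum_mul, Finset.mul_sum]
  exact Finset.sum_comm

lemma neg_one_pow_rev (n : ℕ) (j : Fin (2*n)) :
    ((-1:ℝ)) ^ ((Fin.rev j : ℕ) + 1) = -(-1:ℝ)^((j:ℕ)+1) := by
  have hj : (j:ℕ) < 2*n := j.isLt
  have h : ((Fin.rev j : ℕ) + 1) + ((j:ℕ)+1) = 2*n + 1 := by
    rw [Fin.val_rev]; omega
  have h2 : ((-1:ℝ))^(((Fin.rev j : ℕ) + 1) + ((j:ℕ)+1)) = -1 := by
    rw [h]; exact Odd.neg_one_pow ⟨n, by ring⟩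
  have hB : (-1:ℝ)^((j:ℕ)+1) * (-1:ℝ)^((j:ℕ)+1) = 1 := by
    rw [← pow_add]; exact Even.neg_one_pow ⟨(j:ℕ)+1, by ring⟩
  calc ((-1:ℝ)) ^ ((Fin.rev j : ℕ) + 1)
      = ((-1:ℝ)) ^ ((Fin.rev j : ℕ) + 1) * ((-1:ℝ)^((j:ℕ)+1) * (-1:ℝ)^((j:ℕ)+1)) := by rw [hB, mul_one]
    _ = ((-1:ℝ))^(((Fin.rev j : ℕ) + 1) + ((j:ℕ)+1)) * (-1:ℝ)^((j:ℕ)+1) := by rw [pow_add]; ring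
    _ = -(-1:ℝ)^((j:ℕ)+1) := by rw [h2]; ring

lemma symplForm_skew (n : ℕ) (v w : Fin (2*n) → ℝ) :
    symplForm n w v = - symplForm n v w := by
  unfold symplForm
  rw [← Finset.sum_neg_distrib]
  refine Fintype.sum_equiv Fin.revPerm _ _ fun j => ?_
  simp only [Fin.revPerm_apply, Fin.rev_rev]
  rw [neg_one_pow_rev]; ring

lemma symplForm_continuous (n : ℕ) :
    Continuous fun p : (Fin (2*n) → ℝ) × (Fin (2*n) → ℝ) => symplForm n p.1 p.2 := by
  unfold symplForm
  exact continuous_finset_sum _ fun j _ =>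
    (continuous_const.mul ((continuous_apply j).comp continuous_fst)).mul
      ((continuous_apply (Fin.rev j)).comp continuous_snd)

lemma symplForm_nondeg (n : ℕ) (v : Fin (2*n) → ℝ) (h : ∀ w, symplForm n v w = 0) : v = 0 := by
  funext i
  have hi := h (Pi.single (Fin.rev i) 1)
  simp [symplForm, Pi.single_apply, Fin.rev_inj, mul_ite, Finset.sum_ite_eq'] at hi
  simpa using hi


/-- A symplectic basis of `ℝ^{2n}`: a basis in which the matrix of `ω` is antidiagonal
with alternating entries `±1` (normalized so that the canonical basis is symplectic). -/
def IsSymplecticBasis (n : ℕ) (e : Fin (2 * n) → (Fin (2 * n) → ℝ)) : Prop :=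
  LinearIndependent ℝ e ∧ Submodule.span ℝ (Set.range e) = ⊤ ∧
    ∀ i j : Fin (2 * n), symplForm n (e i) (e j)
      = if j = Fin.rev i then (-1 : ℝ) ^ ((i : ℕ) + 1) else 0

/-- The open symplectic simplex `B = ℙ(ℝ_{>0}-span(e₁,…,e_{2n}))` in `ℙ(ℝ^{2n})`
associated to a symplectic basis `e`. -/
def symplSimplex (n : ℕ) (e : Fin (2 * n) → (Fin (2 * n) → ℝ)) :
    Set (Projectivization ℝ (Fin (2 * n) → ℝ)) :=
  {P | ∃ (v : Fin (2 * n) → ℝ) (hv : v ≠ 0),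
    (∃ c : Fin (2 * n) → ℝ, (∀ i, 0 < c i) ∧ v = ∑ i, c i • e i) ∧
    P = Projectivization.mk ℝ v hv}

noncomputable def sb (n : ℕ) (e : Fin (2 * n) → (Fin (2 * n) → ℝ))
    (he : IsSymplecticBasis n e) : Module.Basis (Fin (2*n)) ℝ (Fin (2*n) → ℝ) :=
  Module.Basis.mk he.1 he.2.1.ge

lemma sb_apply (n e) (he : IsSymplecticBasis n e) (i) : sb n e he i = e i :=
  Module.Basis.mk_apply _ _ _

lemma sb_repr_sum (n e) (he : IsSymplecticBasis n e) (c : Fin (2*n) → ℝ) (i) :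
    (sb n e he).repr (∑ j, c j • e j) i = c i := by
  have h : (∑ j, c j • e j) = ∑ j, c j • (sb n e he) j := by
    simp [sb_apply]
  rw [h]
  rw [Module.Basis.repr_sum_self]

lemma mem_symplSimplex_iff (n e) (he : IsSymplecticBasis n e)
    (P : Projectivization ℝ (Fin (2 * n) → ℝ)) :
    P ∈ symplSimplex n e ↔ ∃ (v : Fin (2*n) → ℝ) (hv : v ≠ 0),
      (∀ i, 0 < (sb n e he).repr v i) ∧ P = Projectivization.mk ℝ v hv := by
  constructor
  · rintro ⟨v, hv, ⟨c, hc, rfl⟩, rfl⟩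
    exact ⟨_, hv, fun i => by rw [sb_repr_sum]; exact hc i, rfl⟩
  · rintro ⟨v, hv, hpos, rfl⟩
    refine ⟨v, hv, ⟨fun i => (sb n e he).repr v i, hpos, ?_⟩, rfl⟩
    conv_lhs => rw [← (sb n e he).sum_repr v]
    exact Finset.sum_congr rfl fun i _ => by rw [sb_apply]

lemma repr_continuous {m : ℕ} (b : Module.Basis (Fin m) ℝ (Fin m → ℝ)) (i : Fin m) :
    Continuous fun v => b.repr v i := by
  have h : (fun v => b.repr v i)
      = ⇑((Finsupp.lapply i).comp (b.repr : (Fin m → ℝ) →ₗ[ℝ] (Fin m →₀ ℝ))) := rfl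
  rw [h]
  exact LinearMap.continuous_of_finiteDimensional _

lemma isClosed_cone {m : ℕ} (b : Module.Basis (Fin m) ℝ (Fin m → ℝ)) :
    IsClosed {v : Fin m → ℝ | ∀ i, 0 ≤ b.repr v i} := by
  have h : {v : Fin m → ℝ | ∀ i, 0 ≤ b.repr v i}
      = ⋂ i, (fun v => b.repr v i) ⁻¹' (Set.Ici 0) := by
    ext v; simp [Set.mem_iInter]
  rw [h]
  exact isClosed_iInter fun i => isClosed_Ici.preimage (repr_continuous b i)

lemma isClosed_anticone {m : ℕ} (b : Module.Basis (Fin m) ℝ (Fin m → ℝ)) :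
    IsClosed {v : Fin m → ℝ | ∀ i, b.repr v i ≤ 0} := by
  have h : {v : Fin m → ℝ | ∀ i, b.repr v i ≤ 0}
      = ⋂ i, (fun v => b.repr v i) ⁻¹' (Set.Iic 0) := by
    ext v; simp [Set.mem_iInter]
  rw [h]
  exact isClosed_iInter fun i => isClosed_Iic.preimage (repr_continuous b i)

lemma mem_closure_simplex (n e) (he : IsSymplecticBasis n e) (v : Fin (2*n) → ℝ)
    (hv : v ≠ 0) (hnn : ∀ i, 0 ≤ (sb n e he).repr v i) :
    Projectivization.mk ℝ v hv ∈ closure (symplSimplex n e) := by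
  obtain ⟨i₀, -⟩ := Function.ne_iff.mp hv
  set b := sb n e he with hb
  set u : ℕ → (Fin (2*n) → ℝ) := fun k => ∑ i, (b.repr v i + 1/(k+1)) • e i with hu
  have hrepr : ∀ k i, b.repr (u k) i = b.repr v i + 1/(k+1) := by
    intro k i; rw [hu]; exact sb_repr_sum n e he _ i
  have hpos : ∀ (k : ℕ) (i), (0:ℝ) < b.repr (u k) i := by
    intro k i; rw [hrepr]
    have : (0:ℝ) < 1/(k+1) := by positivity
    linarith [hnn i]
  have hne : ∀ k, u k ≠ 0 := by
    intro k h0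
    have := hpos k i₀
    rw [h0] at this; simp at this
  have hmem : ∀ k, Projectivization.mk ℝ (u k) (hne k) ∈ symplSimplex n e := by
    intro k
    exact (mem_symplSimplex_iff n e he _).mpr ⟨u k, hne k, hpos k, rfl⟩
  have huv : Tendsto u atTop (𝓝 v) := by
    have h0 : Tendsto (fun k : ℕ => (1/(k+1) : ℝ)) atTop (𝓝 0) := by
      simpa using tendsto_one_div_add_atTop_nhds_zero_nat (𝕜 := ℝ)
    have hform : ∀ k, u k = v + (1/(k+1) : ℝ) • ∑ i, e i := by
      intro k
      rw [hu]
      simp only [add_smul, Finset.sum_add_distrib, Finset.smul_sum]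
      congr 1
      · conv_rhs => rw [← b.sum_repr v]
        exact Finset.sum_congr rfl fun i _ => by rw [sb_apply]
    rw [funext hform]
    have : Tendsto (fun _ : ℕ => v) atTop (𝓝 v) := tendsto_const_nhds
    simpa using this.add (h0.smul_const (∑ i, e i))
  have hsub : Tendsto (fun k => (⟨u k, hne k⟩ : {x : Fin (2*n) → ℝ // x ≠ 0})) atTop
      (𝓝 ⟨v, hv⟩) := tendsto_subtype_rng.mpr huv
  have hq : Tendsto (fun k => Projectivization.mk ℝ (u k) (hne k)) atTop
      (𝓝 (Projectivization.mk ℝ v hv)) :=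
    (continuous_quotient_mk'.tendsto _).comp hsub
  exact mem_closure_of_tendsto hq (Filter.Eventually.of_forall hmem)

lemma closure_simplex_subset (n e) (he : IsSymplecticBasis n e) :
    closure (symplSimplex n e) ⊆
      {P | ∃ (w : Fin (2*n) → ℝ) (hw : w ≠ 0), P = Projectivization.mk ℝ w hw ∧
        ((∀ i, 0 ≤ (sb n e he).repr w i) ∨ (∀ i, (sb n e he).repr w i ≤ 0))} := by
  set b := sb n e he with hb
  apply closure_minimal
  · rintro P hP
    obtain ⟨v, hv, hpos, rfl⟩ := (mem_symplSimplex_iff n e he P).mp hP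
    exact ⟨v, hv, rfl, Or.inl fun i => (hpos i).le⟩
  · have hqm : IsQuotientMap (@Quotient.mk' _ (projectivizationSetoid ℝ (Fin (2*n) → ℝ)) :
        {x : Fin (2*n) → ℝ // x ≠ 0} → Projectivization ℝ (Fin (2*n) → ℝ)) :=
      isQuotientMap_quotient_mk' (s := projectivizationSetoid ℝ (Fin (2*n) → ℝ))
    refine hqm.isClosed_preimage.mp ?_
    have hpre : (@Quotient.mk' _ (projectivizationSetoid ℝ (Fin (2*n) → ℝ)) :
        {x : Fin (2*n) → ℝ // x ≠ 0} → Projectivization ℝ (Fin (2*n) → ℝ)) ⁻¹'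
        {P | ∃ (w : Fin (2*n) → ℝ) (hw : w ≠ 0), P = Projectivization.mk ℝ w hw ∧
          ((∀ i, 0 ≤ b.repr w i) ∨ (∀ i, b.repr w i ≤ 0))}
        = Subtype.val ⁻¹' ({v : Fin (2*n) → ℝ | ∀ i, 0 ≤ b.repr v i}
            ∪ {v : Fin (2*n) → ℝ | ∀ i, b.repr v i ≤ 0}) := by
      ext x
      obtain ⟨xv, hx⟩ := x
      simp only [Set.mem_preimage, Set.mem_setOf_eq, Set.mem_union]
      constructor
      · rintro ⟨w, hw, heq, hcond⟩
        have heq' : Projectivization.mk ℝ xv hx = Projectivization.mk ℝ w hw := heq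
        obtain ⟨a, ha⟩ := (mk_eq_mk_iff ℝ _ _ _ _).mp heq'
        have hx' : ∀ i, b.repr xv i = (a:ℝ) * b.repr w i := by
          intro i
          rw [← ha, Units.smul_def, map_smul]
          simp
        rcases lt_or_gt_of_ne a.ne_zero with hneg | hpos
        · rcases hcond with hc | hc
          · exact Or.inr fun i => by
              rw [hx' i]; exact mul_nonpos_of_nonpos_of_nonneg hneg.le (hc i)
          · exact Or.inl fun i => by
              rw [hx' i]; nlinarith [hc i, hneg.le]
        · rcases hcond with hc | hc
          · exact Or.inl fun i => by
              rw [hx' i]; exact mul_nonneg hpos.le (hc i)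
          · exact Or.inr fun i => by
              rw [hx' i]; exact mul_nonpos_of_nonneg_of_nonpos hpos.le (hc i)
      · rintro h
        exact ⟨xv, hx, rfl, h⟩
    exact hpre ▸ (((isClosed_cone b).union (isClosed_anticone b)).preimage
      continuous_subtype_val)

noncomputable def seq1 (k : ℕ) : ℝ := 1/(k+1)

lemma seq1_pos (k : ℕ) : 0 < seq1 k := by unfold seq1; positivity

lemma seq1_tendsto : Tendsto seq1 atTop (𝓝 0) := by
  unfold seq1; simpa using tendsto_one_div_add_atTop_nhds_zero_nat (𝕜 := ℝ)

lemma symplForm_tendsto_aux (n : ℕ) (x v₀ y w₀ : Fin (2*n) → ℝ) :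
    Tendsto (fun k : ℕ => symplForm n (x + seq1 k • v₀) (y + seq1 k • w₀))
      atTop (𝓝 (symplForm n x y)) := by
  have h1 : Tendsto (fun k : ℕ => x + seq1 k • v₀) atTop (𝓝 x) := by
    have h : Tendsto (fun _ : ℕ => x) atTop (𝓝 x) := tendsto_const_nhds
    simpa using h.add (seq1_tendsto.smul_const v₀)
  have h2 : Tendsto (fun k : ℕ => y + seq1 k • w₀) atTop (𝓝 y) := by
    have h : Tendsto (fun _ : ℕ => y) atTop (𝓝 y) := tendsto_const_nhds
    simpa using h.add (seq1_tendsto.smul_const w₀)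
  have hp : Tendsto (fun k : ℕ => (x + seq1 k • v₀, y + seq1 k • w₀)) atTop
      (𝓝 (x, y)) := h1.prodMk_nhds h2
  have hc := ((symplForm_continuous n).tendsto (x, y)).comp hp
  simpa [Function.comp_def] using hc

lemma repr_basis_nonneg (n e) (he : IsSymplecticBasis n e) (i j : Fin (2*n)) :
    0 ≤ (sb n e he).repr (e i) j := by
  rw [← sb_apply n e he i, Module.Basis.repr_self]
  rcases eq_or_ne i j with rfl | hij
  · simp
  · simp [Finsupp.single_apply_eq_zero.mpr, Finsupp.single_eq_of_ne hij.symm]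

lemma core (n : ℕ) (e₁ e₂ : Fin (2 * n) → (Fin (2 * n) → ℝ))
    (he₁ : IsSymplecticBasis n e₁) (he₂ : IsSymplecticBasis n e₂)
    (H : ∀ v, (∀ i, 0 < (sb n e₁ he₁).repr v i) →
      ∀ w, w ≠ 0 → (∀ i, 0 ≤ (sb n e₂ he₂).repr w i) → symplForm n v w ≠ 0) :
    ∀ v, v ≠ 0 → (∀ i, 0 ≤ (sb n e₁ he₁).repr v i) →
      ∀ w, (∀ i, 0 < (sb n e₂ he₂).repr w i) → symplForm n v w ≠ 0 := by
  intro v hv hvnn w hwpos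
  obtain ⟨i₀, -⟩ := Function.ne_iff.mp hv
  set b₁ := sb n e₁ he₁ with hb₁
  set b₂ := sb n e₂ he₂ with hb₂
  set v₀ : Fin (2*n) → ℝ := ∑ i, e₁ i with hv₀def
  set w₀ : Fin (2*n) → ℝ := ∑ i, e₂ i with hw₀def
  have hv₀r : ∀ i, b₁.repr v₀ i = 1 := by
    intro i
    have : v₀ = ∑ j, (1:ℝ) • e₁ j := by simp [hv₀def]
    rw [this]; exact sb_repr_sum n e₁ he₁ _ i
  have hw₀r : ∀ i, b₂.repr w₀ i = 1 := by
    intro i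
    have : w₀ = ∑ j, (1:ℝ) • e₂ j := by simp [hw₀def]
    rw [this]; exact sb_repr_sum n e₂ he₂ _ i
  have hw₀ne : w₀ ≠ 0 := by
    intro h0
    have := hw₀r i₀; rw [h0] at this; simp at this
  have hne_of_pos₂ : ∀ y, (∀ i, 0 < b₂.repr y i) → y ≠ 0 := by
    intro y hy h0
    have := hy i₀; rw [h0] at this; simp at this
  set s : ℝ := symplForm n v₀ w₀ with hsdef
  have hs : s ≠ 0 := H v₀ (fun i => by rw [hv₀r]; norm_num) w₀ hw₀ne
    (fun i => by rw [hw₀r]; norm_num)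
  -- Claim 1: positivity of s * ω on open cone × open cone
  have claim1 : ∀ x y, (∀ i, 0 < b₁.repr x i) → (∀ i, 0 < b₂.repr y i) →
      0 < s * symplForm n x y := by
    intro x y hx hy
    by_contra hle
    push_neg at hle
    set g : ℝ → ℝ := fun t => s * symplForm n (v₀ + t • (x - v₀)) (w₀ + t • (y - w₀)) with hg
    have hA : Continuous fun t : ℝ => v₀ + t • (x - v₀) :=
      continuous_const.add (continuous_id.smul continuous_const)
    have hB : Continuous fun t : ℝ => w₀ + t • (y - w₀) :=
      continuous_const.add (continuous_id.smul continuous_const)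
    have hgc : Continuous g := by
      apply continuous_const.mul
      have hc := (symplForm_continuous n).comp (hA.prodMk hB)
      simpa [Function.comp_def] using hc
    have hmem₁ : ∀ t ∈ Set.Icc (0:ℝ) 1, ∀ i, 0 < b₁.repr (v₀ + t • (x - v₀)) i := by
      intro t ht i
      have : b₁.repr (v₀ + t • (x - v₀)) i = (1 - t) + t * b₁.repr x i := by
        rw [map_add, map_smul, map_sub]
        simp [hv₀r i]
        ring
      rw [this]
      rcases eq_or_lt_of_le ht.1 with rfl | htpos
      · simp
      · have := hx i
        nlinarith [ht.2]
    have hmem₂ : ∀ t ∈ Set.Icc (0:ℝ) 1, ∀ i, 0 < b₂.repr (w₀ + t • (y - w₀)) i := by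
      intro t ht i
      have : b₂.repr (w₀ + t • (y - w₀)) i = (1 - t) + t * b₂.repr y i := by
        rw [map_add, map_smul, map_sub]
        simp [hw₀r i]
        ring
      rw [this]
      rcases eq_or_lt_of_le ht.1 with rfl | htpos
      · simp
      · have := hy i
        nlinarith [ht.2]
    have hg0 : 0 < g 0 := by
      simp only [hg, zero_smul, add_zero]
      exact mul_self_pos.mpr hs
    have hg1 : g 1 ≤ 0 := by
      simp only [hg, one_smul]
      have h1 : v₀ + (x - v₀) = x := by ring
      have h2 : w₀ + (y - w₀) = y := by ring
      rw [h1, h2]; exact hle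
    obtain ⟨t, ht, hgt⟩ : ∃ t ∈ Set.Icc (0:ℝ) 1, g t = 0 := by
      have := intermediate_value_Icc' (by norm_num : (0:ℝ) ≤ 1) hgc.continuousOn
      have h0mem : (0:ℝ) ∈ Set.Icc (g 1) (g 0) := ⟨hg1, hg0.le⟩
      obtain ⟨t, ht, hgt⟩ := this h0mem
      exact ⟨t, ht, hgt⟩
    have hform0 : symplForm n (v₀ + t • (x - v₀)) (w₀ + t • (y - w₀)) = 0 := by
      have := hgt
      rw [hg] at this
      exact (mul_eq_zero.mp this).resolve_left hs
    exact H _ (hmem₁ t ht) _ (hne_of_pos₂ _ (hmem₂ t ht)) (fun i => (hmem₂ t ht i).le) hform0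
  -- Claim 2: nonnegativity of s * ω on closed cone × closed cone
  have claim2 : ∀ x y, (∀ i, 0 ≤ b₁.repr x i) → (∀ i, 0 ≤ b₂.repr y i) →
      0 ≤ s * symplForm n x y := by
    intro x y hx hy
    have hterm : ∀ k : ℕ, 0 ≤ s * symplForm n (x + seq1 k • v₀) (y + seq1 k • w₀) := by
      intro k
      have htk : (0:ℝ) < seq1 k := seq1_pos k
      refine (claim1 _ _ ?_ ?_).le
      · intro i
        rw [map_add, map_smul]
        simp only [Finsupp.coe_add, Finsupp.coe_smul, Pi.add_apply, Pi.smul_apply, smul_eq_mul]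
        rw [hv₀r i]
        nlinarith [hx i]
      · intro i
        rw [map_add, map_smul]
        simp only [Finsupp.coe_add, Finsupp.coe_smul, Pi.add_apply, Pi.smul_apply, smul_eq_mul]
        rw [hw₀r i]
        nlinarith [hy i]
    have hlim : Tendsto (fun k : ℕ => s * symplForm n (x + seq1 k • v₀)
        (y + seq1 k • w₀)) atTop (𝓝 (s * symplForm n x y)) :=
      (symplForm_tendsto_aux n x v₀ y w₀).const_mul s
    exact ge_of_tendsto' hlim hterm
  -- Final argument
  intro hcontra
  have hv_eq : v = ∑ i, b₁.repr v i • e₁ i := by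
    conv_lhs => rw [← b₁.sum_repr v]
    exact Finset.sum_congr rfl fun i _ => by rw [sb_apply]
  have hexp : s * symplForm n v w = ∑ i, b₁.repr v i * (s * symplForm n (e₁ i) w) := by
    conv_lhs => rw [hv_eq]
    rw [symplForm_sum_left, Finset.mul_sum]
    refine Finset.sum_congr rfl fun i _ => ?_
    rw [symplForm_smul_left]; ring
  have hzero : ∑ i, b₁.repr v i * (s * symplForm n (e₁ i) w) = 0 := by
    rw [← hexp, hcontra, mul_zero]
  have hnn : ∀ i ∈ Finset.univ, 0 ≤ b₁.repr v i * (s * symplForm n (e₁ i) w) := by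
    intro i _
    exact mul_nonneg (hvnn i) (claim2 _ _ (fun j => repr_basis_nonneg n e₁ he₁ i j)
      (fun j => (hwpos j).le))
  have hall := (Finset.sum_eq_zero_iff_of_nonneg hnn).mp hzero
  obtain ⟨i₁, hi₁⟩ : ∃ i, b₁.repr v i ≠ 0 := by
    by_contra hc
    push_neg at hc
    apply hv
    rw [hv_eq]
    exact Finset.sum_eq_zero fun i _ => by rw [hc i, zero_smul]
  have hei₁ : symplForm n (e₁ i₁) w = 0 := by
    have := hall i₁ (Finset.mem_univ i₁)
    rcases mul_eq_zero.mp this with h | h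
    · exact absurd h hi₁
    · exact (mul_eq_zero.mp h).resolve_left hs
  have hw_eq : w = ∑ j, b₂.repr w j • e₂ j := by
    conv_lhs => rw [← b₂.sum_repr w]
    exact Finset.sum_congr rfl fun j _ => by rw [sb_apply]
  have hexp2 : s * symplForm n (e₁ i₁) w = ∑ j, b₂.repr w j * (s * symplForm n (e₁ i₁) (e₂ j)) := by
    conv_lhs => rw [hw_eq]
    rw [symplForm_sum_right, Finset.mul_sum]
    refine Finset.sum_congr rfl fun j _ => ?_
    rw [symplForm_smul_right]; ring
  have hzero2 : ∑ j, b₂.repr w j * (s * symplForm n (e₁ i₁) (e₂ j)) = 0 := by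
    rw [← hexp2, hei₁, mul_zero]
  have hnn2 : ∀ j ∈ Finset.univ, 0 ≤ b₂.repr w j * (s * symplForm n (e₁ i₁) (e₂ j)) := by
    intro j _
    exact mul_nonneg (hwpos j).le (claim2 _ _ (fun k => repr_basis_nonneg n e₁ he₁ i₁ k)
      (fun k => repr_basis_nonneg n e₂ he₂ j k))
  have hall2 := (Finset.sum_eq_zero_iff_of_nonneg hnn2).mp hzero2
  have hij : ∀ j, symplForm n (e₁ i₁) (e₂ j) = 0 := by
    intro j
    have := hall2 j (Finset.mem_univ j)
    rcases mul_eq_zero.mp this with h | h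
    · exact absurd h (ne_of_gt (hwpos j))
    · exact (mul_eq_zero.mp h).resolve_left hs
  have hallu : ∀ u, symplForm n (e₁ i₁) u = 0 := by
    intro u
    have hu_eq : u = ∑ j, b₂.repr u j • e₂ j := by
      conv_lhs => rw [← b₂.sum_repr u]
      exact Finset.sum_congr rfl fun j _ => by rw [sb_apply]
    rw [hu_eq, symplForm_sum_right]
    exact Finset.sum_eq_zero fun j _ => by rw [symplForm_smul_right, hij j, mul_zero]
  exact he₁.1.ne_zero i₁ (symplForm_nondeg n (e₁ i₁) hallu)

/-- The dual `B* = {[v] : ℙ(v^⊥) ∩ cl(B) = ∅}` of a subset `B` of `ℙ(ℝ^{2n})`, where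
`v^⊥` is the `ω`-orthogonal hyperplane of `v`. -/
def symplDual (n : ℕ) (B : Set (Projectivization ℝ (Fin (2 * n) → ℝ))) :
    Set (Projectivization ℝ (Fin (2 * n) → ℝ)) :=
  {P | ∃ (v : Fin (2 * n) → ℝ) (hv : v ≠ 0), P = Projectivization.mk ℝ v hv ∧
    ∀ Q ∈ closure B, ∀ (w : Fin (2 * n) → ℝ) (hw : w ≠ 0),
      Q = Projectivization.mk ℝ w hw → symplForm n v w ≠ 0}

lemma aux_subset (n : ℕ) (e₁ e₂ : Fin (2 * n) → (Fin (2 * n) → ℝ))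
    (he₁ : IsSymplecticBasis n e₁) (he₂ : IsSymplecticBasis n e₂)
    (h : symplSimplex n e₁ ⊆ symplDual n (symplSimplex n e₂)) :
    symplSimplex n e₂ ⊆ symplDual n (symplSimplex n e₁) := by
  set b₁ := sb n e₁ he₁ with hb₁
  set b₂ := sb n e₂ he₂ with hb₂
  -- Extract the concrete nonvanishing hypothesis
  have H : ∀ v, (∀ i, 0 < b₁.repr v i) →
      ∀ w, w ≠ 0 → (∀ i, 0 ≤ b₂.repr w i) → symplForm n v w ≠ 0 := by
    intro v hvpos w hw hwnn
    obtain ⟨i₀, -⟩ := Function.ne_iff.mp hw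
    have hvne : v ≠ 0 := by
      intro h0
      have := hvpos i₀; rw [h0] at this; simp at this
    have hPmem : Projectivization.mk ℝ v hvne ∈ symplSimplex n e₁ :=
      (mem_symplSimplex_iff n e₁ he₁ _).mpr ⟨v, hvne, hvpos, rfl⟩
    obtain ⟨v', hv', heq, hprop⟩ := h hPmem
    obtain ⟨a, ha⟩ := (mk_eq_mk_iff ℝ _ _ _ _).mp heq
    have hQ : Projectivization.mk ℝ w hw ∈ closure (symplSimplex n e₂) :=
      mem_closure_simplex n e₂ he₂ w hw hwnn
    have hv'w := hprop _ hQ w hw rfl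
    intro h0
    apply hv'w
    have hsmul : symplForm n v w = (a : ℝ) * symplForm n v' w := by
      rw [← ha, Units.smul_def, symplForm_smul_left]
    have : (a : ℝ) * symplForm n v' w = 0 := by rw [← hsmul, h0]
    exact (mul_eq_zero.mp this).resolve_left a.ne_zero
  have key := core n e₁ e₂ he₁ he₂ H
  rintro P hP
  obtain ⟨w, hw, hwpos, rfl⟩ := (mem_symplSimplex_iff n e₂ he₂ P).mp hP
  refine ⟨w, hw, rfl, ?_⟩
  intro Q hQ u hu hQeq
  obtain ⟨u', hu', hQeq', hcond⟩ := closure_simplex_subset n e₁ he₁ hQ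
  rw [hQeq] at hQeq'
  obtain ⟨a, ha⟩ := (mk_eq_mk_iff ℝ _ _ _ _).mp hQeq'
  intro h0
  have hswap : symplForm n u w = 0 := by
    rw [symplForm_skew, h0, neg_zero]
  have hu'w : symplForm n u' w = 0 := by
    have hsmul : symplForm n u w = (a : ℝ) * symplForm n u' w := by
      rw [← ha, Units.smul_def, symplForm_smul_left]
    have : (a : ℝ) * symplForm n u' w = 0 := by rw [← hsmul, hswap]
    exact (mul_eq_zero.mp this).resolve_left a.ne_zero
  rcases hcond with hnn | hnp
  · exact key u' hu' hnn w hwpos hu'w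
  · refine key (-u') (neg_ne_zero.mpr hu') (fun i => ?_) w hwpos ?_
    · rw [map_neg]
      simpa using hnp i
    · rw [symplForm_skew] at hu'w ⊢
      have : symplForm n w (-u') = - symplForm n w u' := by
        have := symplForm_smul_right n (-1 : ℝ) w u'
        simpa using this
      rw [this]
      simp only [neg_eq_zero]
      simpa using hu'w

/-- For symplectic simplices `B₁, B₂` in `ℙ(ℝ^{2n})`, one has `B₁ ⊆ B₂*` if and only
if `B₂ ⊆ B₁*`. -/
theorem symplSimplex_subset_dual_symm (n : ℕ)
    (e₁ e₂ : Fin (2 * n) → (Fin (2 * n) → ℝ))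
    (he₁ : IsSymplecticBasis n e₁) (he₂ : IsSymplecticBasis n e₂) :
    symplSimplex n e₁ ⊆ symplDual n (symplSimplex n e₂)
      ↔ symplSimplex n e₂ ⊆ symplDual n (symplSimplex n e₁) := by
  constructor
  · exact aux_subset n e₁ e₂ he₁ he₂
  · exact aux_subset n e₂ e₁ he₂ he₁
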